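/- Let R be a commutative ring, A an R-module, and x_1,...,x_p elements of R. The sequence x_1,...,x_p is A-regular if and only if for all 1 ≤ k ≤ p, the Koszul complex K(x_1,...,x_k; A) is a left resolution of A/(x_1,...,x_k)A (i.e. has vanishing homology in all negative degrees). -/

import Mathlib

open RingTheory.Sequence

variable {R : Type*} [CommRing R] {A : Type*} [AddCommGroup A] [Module R A]

/-- The module of `q`-chains of the Koszul complex `K(x_1,...,x_k; A)` associated to a
list `x` of elements of `R` and the `R`-module `A`: the direct sum of copies of `A`
indexed by the subsets of `{1,...,k}` of cardinality `q` (this is the usual description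
of `Λ^q R^k ⊗ A` in the standard basis). It sits in (cohomological) degree `-q`. -/
def koszulChains (x : List R) (A : Type*) [AddCommGroup A] [Module R A] (q : ℕ) : Type _ :=
  {S : Finset (Fin x.length) // S.card = q} → A

noncomputable instance (x : List R) (q : ℕ) : AddCommGroup (koszulChains x A q) :=
  inferInstanceAs (AddCommGroup ({S : Finset (Fin x.length) // S.card = q} → A))

/-- The Koszul differential `K_{q+1} → K_q` of the Koszul complex `K(x; A)`:
`(d f)(T) = Σ_{i ∉ T} (-1)^{#{j ∈ T | j < i}} x_i • f(T ∪ {i})`. -/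
noncomputable def koszulDiff (x : List R) (q : ℕ)
    (f : koszulChains x A (q + 1)) : koszulChains x A q :=
  fun T => ∑ i ∈ T.1ᶜ.attach,
    ((-1 : ℤ) ^ (T.1.filter (fun j => j < i.1)).card) •
      (x.get i.1 • f ⟨insert i.1 T.1, by
        rw [Finset.card_insert_of_notMem (Finset.mem_compl.mp i.2), T.2]⟩)


namespace KoszulAux

variable {R : Type*} [CommRing R] {A : Type*} [AddCommGroup A] [Module R A]

/-- Abstract Koszul chains indexed by `Fin n`. -/
abbrev KC (A : Type*) (n q : ℕ) : Type _ := {S : Finset (Fin n) // S.card = q} → A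

/-- Abstract Koszul differential. -/
noncomputable def KD {n : ℕ} (c : Fin n → R) (q : ℕ)
    (f : KC A n (q + 1)) : KC A n q :=
  fun T => ∑ i ∈ T.1ᶜ.attach,
    ((-1 : ℤ) ^ (T.1.filter (fun j => j < i.1)).card) •
      (c i.1 • f ⟨insert i.1 T.1, by
        rw [Finset.card_insert_of_notMem (Finset.mem_compl.mp i.2), T.2]⟩)

/-- Extension of a chain by zero to all finsets, to avoid dependent proofs. -/
def kext {n q : ℕ} (f : KC A n q) (U : Finset (Fin n)) : A :=
  if h : U.card = q then f ⟨U, h⟩ else 0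

lemma kext_of_card {n q : ℕ} (f : KC A n q) {U : Finset (Fin n)} (h : U.card = q) :
    kext f U = f ⟨U, h⟩ := dif_pos h

lemma KD_apply {n : ℕ} (c : Fin n → R) (q : ℕ) (f : KC A n (q + 1))
    (T : {S : Finset (Fin n) // S.card = q}) :
    KD c q f T = ∑ i ∈ T.1ᶜ,
      ((-1 : ℤ) ^ (T.1.filter (fun j => j < i)).card) • (c i • kext f (insert i T.1)) := by
  rw [KD, ← Finset.sum_attach (T.1ᶜ)
    (fun i => ((-1 : ℤ) ^ (T.1.filter (fun j => j < i)).card) • (c i • kext f (insert i T.1)))]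
  refine Finset.sum_congr rfl fun i _ => ?_
  congr 2
  rw [kext_of_card]

lemma KD_add {n : ℕ} (c : Fin n → R) (q : ℕ) (f g : KC A n (q + 1)) :
    KD c q (f + g) = KD c q f + KD c q g := by
  funext T
  show KD c q (f+g) T = KD c q f T + KD c q g T
  simp only [KD, ← Finset.sum_add_distrib]
  refine Finset.sum_congr rfl fun i _ => ?_
  show _ • (_ • (f _ + g _)) = _
  rw [smul_add, smul_add]

lemma KD_zero {n : ℕ} (c : Fin n → R) (q : ℕ) : KD (A := A) c q 0 = 0 := by
  funext T
  show KD c q 0 T = 0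
  simp only [KD]
  refine Finset.sum_eq_zero fun i _ => ?_
  show _ • (_ • (0:A)) = 0
  rw [smul_zero, smul_zero]

lemma KD_rsmul {n : ℕ} (c : Fin n → R) (q : ℕ) (r : R) (f : KC A n (q + 1)) :
    KD c q (r • f) = r • KD c q f := by
  funext T
  show KD c q (r • f) T = r • KD c q f T
  simp only [KD, Finset.smul_sum]
  refine Finset.sum_congr rfl fun i _ => ?_
  show _ • (_ • (r • f _)) = r • (_ • (_ • f _))
  rw [smul_comm r, smul_comm r]

lemma KD_zsmul {n : ℕ} (c : Fin n → R) (q : ℕ) (z : ℤ) (f : KC A n (q + 1)) :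
    KD c q (z • f) = z • KD c q f := by
  funext T
  show KD c q (z • f) T = z • KD c q f T
  simp only [KD, Finset.smul_sum]
  refine Finset.sum_congr rfl fun i _ => ?_
  show _ • (_ • (z • f _)) = z • (_ • (_ • f _))
  rw [smul_comm z, smul_comm z]

/-! ### Finset lemmas about `lft` -/

variable {n : ℕ}

/-- Push a finset of `Fin n` into `Fin (n+1)`. -/
def lft (S : Finset (Fin n)) : Finset (Fin (n + 1)) := S.map Fin.castSuccEmb

lemma mem_lft {S : Finset (Fin n)} {j : Fin n} : j.castSucc ∈ lft S ↔ j ∈ S :=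
  Finset.mem_map' _

lemma last_not_mem_lft {S : Finset (Fin n)} : Fin.last n ∉ lft S := by
  intro h
  obtain ⟨j, -, hj⟩ := Finset.mem_map.mp h
  exact absurd hj (Fin.castSucc_lt_last j).ne

lemma card_lft (S : Finset (Fin n)) : (lft S).card = S.card := Finset.card_map _

lemma lft_insert (i : Fin n) (S : Finset (Fin n)) :
    lft (insert i S) = insert i.castSucc (lft S) := Finset.map_insert _ _ _

lemma lft_injective : Function.Injective (lft (n := n)) :=
  Finset.map_injective _

lemma compl_lft (S : Finset (Fin n)) : (lft S)ᶜ = insert (Fin.last n) (lft Sᶜ) := by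
  ext i
  induction i using Fin.lastCases with
  | last => simp [last_not_mem_lft]
  | cast j =>
      simp only [Finset.mem_compl, mem_lft, Finset.mem_insert, mem_lft]
      simp [(Fin.castSucc_lt_last j).ne]

lemma compl_insert_last (S : Finset (Fin n)) :
    (insert (Fin.last n) (lft S))ᶜ = lft Sᶜ := by
  ext i
  induction i using Fin.lastCases with
  | last => simp [last_not_mem_lft]
  | cast j =>
      simp only [Finset.mem_compl, Finset.mem_insert, mem_lft]
      simp [(Fin.castSucc_lt_last j).ne]

lemma filter_lft_card (S : Finset (Fin n)) (i : Fin n) :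
    ((lft S).filter (fun j => j < i.castSucc)).card = (S.filter (fun j => j < i)).card := by
  rw [lft, Finset.filter_map, Finset.card_map]
  congr 1

lemma filter_lft_last (S : Finset (Fin n)) :
    ((lft S).filter (fun j => j < Fin.last n)).card = S.card := by
  rw [lft, Finset.filter_map, Finset.card_map,
    Finset.filter_true_of_mem fun j _ => (by simpa using Fin.castSucc_lt_last j)]

lemma filter_insert_last_card (T : Finset (Fin (n + 1))) (i : Fin n) :
    ((insert (Fin.last n) T).filter (fun j => j < i.castSucc)).card
      = (T.filter (fun j => j < i.castSucc)).card := by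
  rw [Finset.filter_insert, if_neg]
  exact fun h => absurd h (not_lt.mpr (Fin.castSucc_lt_last i).le)

lemma insert_castSucc_insert_last (i : Fin n) (S : Finset (Fin n)) :
    insert i.castSucc (insert (Fin.last n) (lft S)) = insert (Fin.last n) (lft (insert i S)) := by
  rw [Finset.insert_comm, lft_insert]

lemma sum_lft {β : Type*} [AddCommMonoid β] (S : Finset (Fin n)) (F : Fin (n + 1) → β) :
    ∑ x ∈ lft S, F x = ∑ x ∈ S, F x.castSucc :=
  Finset.sum_map S Fin.castSuccEmb F

lemma exists_lft {T : Finset (Fin (n + 1))} (h : Fin.last n ∉ T) : ∃ S, lft S = T := by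
  refine ⟨T.preimage Fin.castSucc ((Fin.castSucc_injective n).injOn), ?_⟩
  ext i
  induction i using Fin.lastCases with
  | last => simp [last_not_mem_lft, h]
  | cast j => rw [mem_lft, Finset.mem_preimage]

/-! ### Decomposition of chains over `Fin (n+1)` -/

variable {q : ℕ}

/-- Restriction to subsets not containing the last index. -/
def res (f : KC A (n + 1) q) : KC A n q :=
  fun S => f ⟨lft S.1, by rw [card_lft, S.2]⟩

/-- The component of subsets containing the last index. -/
def top (f : KC A (n + 1) (q + 1)) : KC A n q :=
  fun S => f ⟨insert (Fin.last n) (lft S.1), by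
    rw [Finset.card_insert_of_notMem last_not_mem_lft, card_lft, S.2]⟩

lemma kext_lft (f : KC A (n + 1) q) (U : Finset (Fin n)) :
    kext (res f) U = kext f (lft U) := by
  unfold kext
  by_cases h : U.card = q
  · rw [dif_pos h, dif_pos (by rw [card_lft, h])]
    rfl
  · rw [dif_neg h, dif_neg (by rw [card_lft]; exact h)]

lemma kext_insert_last (f : KC A (n + 1) (q + 1)) (U : Finset (Fin n)) :
    kext (top f) U = kext f (insert (Fin.last n) (lft U)) := by
  unfold kext
  by_cases h : U.card = q
  · rw [dif_pos h,
      dif_pos (by rw [Finset.card_insert_of_notMem last_not_mem_lft, card_lft, h])]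
    rfl
  · rw [dif_neg h, dif_neg]
    rw [Finset.card_insert_of_notMem last_not_mem_lft, card_lft]
    exact fun hc => h (by omega)

/-- Key equation 1: the first component of the differential. -/
lemma res_KD (c : Fin (n + 1) → R) (f : KC A (n + 1) (q + 1)) :
    res (KD c q f) = KD (c ∘ Fin.castSucc) q (res f)
      + ((-1 : ℤ) ^ q • (c (Fin.last n) • top f)) := by
  funext S
  show KD c q f ⟨lft S.1, _⟩ = KD (c ∘ Fin.castSucc) q (res f) S
      + (-1 : ℤ) ^ q • (c (Fin.last n) • top f S)
  rw [KD_apply, KD_apply]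
  show ∑ i ∈ (lft S.1)ᶜ, _ = _
  rw [compl_lft, Finset.sum_insert last_not_mem_lft, sum_lft]
  rw [add_comm]
  congr 1
  · refine Finset.sum_congr rfl fun i _ => ?_
    show ((-1:ℤ) ^ ((lft S.1).filter (fun j => j < i.castSucc)).card) •
        (c i.castSucc • kext f (insert i.castSucc (lft S.1))) = _
    rw [filter_lft_card, ← lft_insert, ← kext_lft]
    rfl
  · show ((-1:ℤ) ^ ((lft S.1).filter (fun j => j < Fin.last n)).card) •
        (c (Fin.last n) • kext f (insert (Fin.last n) (lft S.1))) = _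
    rw [filter_lft_last, S.2, kext_of_card f
      (by rw [Finset.card_insert_of_notMem last_not_mem_lft, card_lft, S.2])]
    rfl

/-- Key equation 2: the second component of the differential. -/
lemma top_KD (c : Fin (n + 1) → R) (f : KC A (n + 1) (q + 2)) :
    top (KD c (q + 1) f) = KD (c ∘ Fin.castSucc) q (top f) := by
  funext S
  show KD c (q+1) f ⟨insert (Fin.last n) (lft S.1), _⟩ = KD (c ∘ Fin.castSucc) q (top f) S
  rw [KD_apply, KD_apply]
  show ∑ i ∈ (insert (Fin.last n) (lft S.1))ᶜ, _ = _
  rw [compl_insert_last, sum_lft]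
  refine Finset.sum_congr rfl fun i _ => ?_
  show ((-1:ℤ) ^ ((insert (Fin.last n) (lft S.1)).filter (fun j => j < i.castSucc)).card) •
      (c i.castSucc • kext f (insert i.castSucc (insert (Fin.last n) (lft S.1)))) = _
  rw [filter_insert_last_card, filter_lft_card, insert_castSucc_insert_last,
    ← kext_insert_last]
  rfl

/-- Extensionality at positive degree. -/
lemma res_top_ext {f g : KC A (n + 1) (q + 1)} (h1 : res f = res g) (h2 : top f = top g) :
    f = g := by
  funext T
  by_cases hl : Fin.last n ∈ T.1
  · obtain ⟨S, hS⟩ := exists_lft (T := T.1.erase (Fin.last n)) (Finset.notMem_erase _ _)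
    have hT : T.1 = insert (Fin.last n) (lft S) := by
      rw [hS, Finset.insert_erase hl]
    have hSc : S.card = q := by
      have := card_lft S
      rw [hS, Finset.card_erase_of_mem hl, T.2] at this
      omega
    have hfT : ∀ f' : KC A (n+1) (q+1), f' T = top f' ⟨S, hSc⟩ := by
      intro f'
      show f' T = f' ⟨insert (Fin.last n) (lft S), _⟩
      congr 1
      exact Subtype.ext hT
    rw [hfT f, hfT g, h2]
  · obtain ⟨S, hS⟩ := exists_lft hl
    have hSc : S.card = q + 1 := by rw [← card_lft S, hS, T.2]
    have hfT : ∀ f' : KC A (n+1) (q+1), f' T = res f' ⟨S, hSc⟩ := by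
      intro f'
      show f' T = f' ⟨lft S, _⟩
      congr 1
      exact Subtype.ext hS.symm
    rw [hfT f, hfT g, h1]

/-- Extensionality at degree zero. -/
lemma res_ext_zero {f g : KC A (n + 1) 0} (h1 : res f = res g) : f = g := by
  funext T
  have hT : T.1 = lft ∅ := by
    rw [Finset.card_eq_zero.mp T.2]
    rfl
  have hfT : ∀ f' : KC A (n+1) 0, f' T = res f' ⟨∅, rfl⟩ := by
    intro f'
    show f' T = f' ⟨lft ∅, _⟩
    congr 1
    exact Subtype.ext hT
  rw [hfT f, hfT g, h1]

lemma res_add (f g : KC A (n + 1) q) : res (f + g) = res f + res g := rfl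
lemma res_zero : res (0 : KC A (n + 1) q) = 0 := rfl
lemma top_zero : top (0 : KC A (n + 1) (q + 1)) = 0 := rfl

/-- Pull a finset of `Fin (n+1)` back to `Fin n`. -/
noncomputable def dwn (T : Finset (Fin (n + 1))) : Finset (Fin n) :=
  T.preimage Fin.castSucc ((Fin.castSucc_injective n).injOn)

noncomputable def glue (g : KC A n (q + 1)) (h : KC A n q) : KC A (n + 1) (q + 1) :=
  fun T =>
    if Fin.last n ∈ T.1 then kext h (dwn (T.1.erase (Fin.last n)))
    else kext g (dwn T.1)

lemma dwn_lft (S : Finset (Fin n)) : dwn (lft S) = S := by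
  ext j
  rw [dwn, Finset.mem_preimage, mem_lft]

lemma res_glue (g : KC A n (q + 1)) (h : KC A n q) : res (glue g h) = g := by
  funext S
  show glue g h ⟨lft S.1, _⟩ = g S
  rw [glue]
  show (if Fin.last n ∈ lft S.1 then _ else kext g (dwn (lft S.1))) = g S
  rw [if_neg last_not_mem_lft, dwn_lft, kext_of_card g S.2]

lemma top_glue (g : KC A n (q + 1)) (h : KC A n q) : top (glue g h) = h := by
  funext S
  show glue g h ⟨insert (Fin.last n) (lft S.1), _⟩ = h S
  rw [glue]
  show (if Fin.last n ∈ insert (Fin.last n) (lft S.1) then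
      kext h (dwn ((insert (Fin.last n) (lft S.1)).erase (Fin.last n))) else _) = h S
  rw [if_pos (Finset.mem_insert_self _ _),
    Finset.erase_insert last_not_mem_lft, dwn_lft, kext_of_card h S.2]

/-! ### d² = 0 and exactness -/

lemma KC0_ext {m : ℕ} {f g : KC A m 0} (h : f ⟨∅, Finset.card_empty⟩ = g ⟨∅, Finset.card_empty⟩) :
    f = g := by
  funext T
  have hT : T = ⟨∅, Finset.card_empty⟩ := Subtype.ext (Finset.card_eq_zero.mp T.2)
  rw [hT, h]

lemma KD_zero_eval {m : ℕ} (c : Fin m → R) (f : KC A m 1) :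
    KD c 0 f ⟨∅, Finset.card_empty⟩ = ∑ i, c i • kext f {i} := by
  rw [KD_apply]
  show ∑ i ∈ (∅ : Finset (Fin m))ᶜ,
      ((-1:ℤ) ^ ((∅ : Finset (Fin m)).filter (fun j => j < i)).card) •
        (c i • kext f (insert i ∅)) = _
  rw [Finset.compl_empty]
  refine Finset.sum_congr rfl fun i _ => ?_
  rw [Finset.filter_empty, Finset.card_empty, pow_zero, one_smul]
  rfl

/-- The degree-one chain associated to a vector. -/
def sing {m : ℕ} (g : Fin m → A) : KC A m 1 := fun S => ∑ j ∈ S.1, g j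

lemma kext_sing {m : ℕ} (g : Fin m → A) (i : Fin m) : kext (sing g) {i} = g i := by
  rw [kext_of_card _ (Finset.card_singleton i)]
  exact Finset.sum_singleton _ _

lemma KD_KD : ∀ (m : ℕ) (c : Fin m → R) (q : ℕ) (F : KC A m (q + 2)),
    KD c q (KD c (q + 1) F) = 0
  | 0, c, q, F => by
      funext T
      show KD c q _ T = (0 : KC A 0 q) T
      rw [KD_apply]
      exact Finset.sum_eq_zero fun i _ => i.elim0
  | (m + 1), c, q, F => by
      have hres : res (KD c q (KD c (q + 1) F)) = 0 := by
        rw [res_KD, res_KD, top_KD, KD_add, KD_zsmul, KD_rsmul,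
          KD_KD m (c ∘ Fin.castSucc) q (res F), zero_add, pow_succ, mul_neg_one, neg_smul]
        exact neg_add_cancel _
      cases q with
      | zero => exact res_ext_zero (by rw [hres, res_zero])
      | succ q' =>
          refine res_top_ext (by rw [hres, res_zero]) ?_
          rw [top_zero, top_KD, top_KD, KD_KD m (c ∘ Fin.castSucc) q' (top F)]

lemma exact_zero (c : Fin 0 → R) (q : ℕ) :
    Function.Exact (KD (A := A) c (q + 1)) (KD c q) := by
  intro f
  constructor
  · intro _
    refine ⟨0, ?_⟩
    funext T
    have h0 : T.1 = ∅ := Finset.eq_empty_of_forall_notMem fun i _ => i.elim0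
    have h1 : q + 1 = 0 := by rw [← T.2, h0, Finset.card_empty]
    exact absurd h1 (Nat.succ_ne_zero q)
  · rintro ⟨F, rfl⟩
    exact KD_KD 0 c q F

lemma exact_step (c : Fin (n + 1) → R)
    (hy : ∀ q, Function.Exact (KD (A := A) (c ∘ Fin.castSucc) (q + 1))
      (KD (c ∘ Fin.castSucc) q))
    (hreg : ∀ m : A, (∃ g : Fin n → A, c (Fin.last n) • m = ∑ i, c (Fin.castSucc i) • g i) →
      ∃ g : Fin n → A, m = ∑ i, c (Fin.castSucc i) • g i)
    (q : ℕ) : Function.Exact (KD (A := A) c (q + 1)) (KD c q) := by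
  intro f
  constructor
  · intro hf
    -- hf : KD c q f = 0
    have key : ∃ hh : KC A n (q + 1), KD (c ∘ Fin.castSucc) q hh = top f := by
      cases q with
      | zero =>
          have e1 : KD (c ∘ Fin.castSucc) 0 (res f)
              + ((-1:ℤ) ^ 0 • (c (Fin.last n) • top f)) = 0 := by
            rw [← res_KD c f, hf, res_zero]
          have e2 := congrFun e1 ⟨∅, Finset.card_empty⟩
          rw [pow_zero, one_smul] at e2
          have e3 : c (Fin.last n) • top f ⟨∅, Finset.card_empty⟩
              = ∑ i, c (Fin.castSucc i) • (-(kext (res f) {i})) := by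
            have : KD (c ∘ Fin.castSucc) 0 (res f) ⟨∅, Finset.card_empty⟩
                + c (Fin.last n) • top f ⟨∅, Finset.card_empty⟩ = 0 := e2
            rw [KD_zero_eval] at this
            rw [eq_neg_of_add_eq_zero_right this]
            simp [smul_neg]
          obtain ⟨g, hg⟩ := hreg _ ⟨_, e3⟩
          refine ⟨sing g, KC0_ext ?_⟩
          rw [KD_zero_eval]
          simp only [kext_sing]
          exact hg.symm
      | succ q' =>
          have e : KD (c ∘ Fin.castSucc) q' (top f) = 0 := by
            rw [← top_KD c f, hf, top_zero]
          exact (hy q' (top f)).mp e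
    obtain ⟨hh, hhh⟩ := key
    have hu : KD (c ∘ Fin.castSucc) q
        (res f + (-1:ℤ) ^ q • (c (Fin.last n) • hh)) = 0 := by
      rw [KD_add, KD_zsmul, KD_rsmul, hhh]
      have e := res_KD c f
      rw [hf, res_zero] at e
      exact e.symm
    obtain ⟨F1, hF1⟩ := (hy q _).mp hu
    refine ⟨glue F1 hh, ?_⟩
    refine res_top_ext ?_ ?_
    · rw [res_KD, res_glue, top_glue, hF1, pow_succ, mul_neg_one, neg_smul,
        add_assoc, add_neg_cancel, add_zero]
    · rw [top_KD, top_glue, hhh]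
  · rintro ⟨F, rfl⟩
    exact KD_KD (n + 1) c q F

lemma compl_singleton_last :
    ({Fin.last n} : Finset (Fin (n + 1)))ᶜ = lft Finset.univ := by
  ext i
  induction i using Fin.lastCases with
  | last => simp [last_not_mem_lft]
  | cast j => simp [mem_lft, (Fin.castSucc_lt_last j).ne]

lemma reg_of_exact (c : Fin (n + 1) → R)
    (hex : Function.Exact (KD (A := A) c 1) (KD c 0)) (m : A)
    (hm : ∃ g : Fin n → A, c (Fin.last n) • m = ∑ i, c (Fin.castSucc i) • g i) :
    ∃ g : Fin n → A, m = ∑ i, c (Fin.castSucc i) • g i := by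
  obtain ⟨g, hg⟩ := hm
  set v : Fin (n + 1) → A := Fin.lastCases m (fun i => -(g i)) with hv
  have hcycle : KD c 0 (sing v) = 0 := by
    refine KC0_ext ?_
    rw [KD_zero_eval]
    show ∑ i, c i • kext (sing v) {i} = 0
    simp only [kext_sing]
    rw [Fin.sum_univ_castSucc]
    simp only [hv, Fin.lastCases_castSucc, Fin.lastCases_last]
    rw [hg]
    simp [smul_neg]
  obtain ⟨F, hF⟩ := (hex (sing v)).mp hcycle
  have hFe := congrFun hF ⟨{Fin.last n}, Finset.card_singleton _⟩
  refine ⟨fun i => kext F (insert (Fin.castSucc i) {Fin.last n}), ?_⟩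
  have hrhs : sing v ⟨{Fin.last n}, Finset.card_singleton _⟩ = m := by
    show ∑ j ∈ {Fin.last n}, v j = m
    rw [Finset.sum_singleton]
    simp only [hv, Fin.lastCases_last]
  rw [← hrhs, ← hFe, KD_apply]
  show ∑ i ∈ ({Fin.last n} : Finset (Fin (n + 1)))ᶜ,
      ((-1:ℤ) ^ (({Fin.last n} : Finset (Fin (n+1))).filter (fun j => j < i)).card) •
        (c i • kext F (insert i {Fin.last n})) = _
  rw [compl_singleton_last, sum_lft]
  refine Finset.sum_congr rfl fun i _ => ?_
  rw [Finset.filter_singleton, if_neg (not_lt.mpr (Fin.castSucc_lt_last i).le),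
    Finset.card_empty, pow_zero, one_smul]

/-! ### The concrete regularity predicate -/

/-- Concrete regularity of `c : Fin n → R` on `A`, defined recursively from the right. -/
def Reg (A : Type*) [AddCommGroup A] [Module R A] : ∀ n : ℕ, (Fin n → R) → Prop
  | 0, _ => True
  | (n + 1), c => Reg A n (c ∘ Fin.castSucc) ∧
      ∀ m : A, (∃ g : Fin n → A, c (Fin.last n) • m = ∑ i, c (Fin.castSucc i) • g i) →
        ∃ g : Fin n → A, m = ∑ i, c (Fin.castSucc i) • g i

lemma reg_exact : ∀ {n : ℕ} (c : Fin n → R), Reg A n c →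
    ∀ q, Function.Exact (KD (A := A) c (q + 1)) (KD c q)
  | 0, c, _, q => exact_zero c q
  | (n + 1), c, h, q => exact_step c (fun q' => reg_exact (c ∘ Fin.castSucc) h.1 q') h.2 q

theorem reg_iff_exact (n : ℕ) (c : Fin n → R) :
    Reg A n c ↔ ∀ k (hk : k ≤ n) (q : ℕ),
      Function.Exact (KD (A := A) (c ∘ Fin.castLE hk) (q + 1)) (KD (c ∘ Fin.castLE hk) q) := by
  induction n with
  | zero =>
      refine ⟨fun _ k hk q => ?_, fun _ => trivial⟩
      interval_cases k
      exact exact_zero _ q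
  | succ n ih =>
      constructor
      · intro h k hk q
        rcases Nat.lt_succ_iff_lt_or_eq.mp (Nat.lt_succ_of_le hk) with hk' | rfl
        · exact (ih (c ∘ Fin.castSucc)).mp h.1 k (Nat.lt_succ_iff.mp hk') q
        · exact reg_exact c h q
      · intro h
        refine ⟨(ih (c ∘ Fin.castSucc)).mpr
          (fun k hk q => h k (hk.trans n.le_succ) q), fun m hm => ?_⟩
        exact reg_of_exact c (h (n + 1) le_rfl 0) m hm

/-! ### Bridge to `IsWeaklyRegular` -/

lemma mem_span_range_smul_top_iff {n : ℕ} (c : Fin n → R) (m : A) :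
    m ∈ (Ideal.span (Set.range c) • ⊤ : Submodule R A) ↔
      ∃ g : Fin n → A, m = ∑ i, c i • g i := by
  constructor
  · intro hm
    refine Submodule.smul_induction_on hm (fun r hr x _ => ?_) (fun x y hx hy => ?_)
    · induction hr using Submodule.span_induction with
      | mem r hr =>
          obtain ⟨i, rfl⟩ := hr
          exact ⟨fun j => if j = i then x else 0, by simp⟩
      | zero => exact ⟨0, by simp⟩
      | add r r' _ _ hr hr' =>
          obtain ⟨g, hg⟩ := hr
          obtain ⟨g', hg'⟩ := hr'
          exact ⟨g + g', by
            rw [add_smul, hg, hg', ← Finset.sum_add_distrib]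
            exact Finset.sum_congr rfl fun i _ => by simp [smul_add]⟩
      | smul a r _ hr =>
          obtain ⟨g, hg⟩ := hr
          refine ⟨fun i => a • g i, ?_⟩
          rw [smul_eq_mul, mul_comm, mul_smul, smul_comm r a x, hg, Finset.smul_sum]
          exact Finset.sum_congr rfl fun i _ => smul_comm a (c i) (g i)
    · obtain ⟨g, hg⟩ := hx
      obtain ⟨g', hg'⟩ := hy
      exact ⟨g + g', by
        rw [hg, hg', ← Finset.sum_add_distrib]
        exact Finset.sum_congr rfl fun i _ => by simp [smul_add]⟩
  · rintro ⟨g, rfl⟩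
    exact Submodule.sum_mem _ fun i _ => Submodule.smul_mem_smul
      (Ideal.subset_span ⟨i, rfl⟩) Submodule.mem_top

lemma ofList_ofFn {n : ℕ} (c : Fin n → R) :
    Ideal.ofList (List.ofFn c) = Ideal.span (Set.range c) := by
  have h : {r : R | r ∈ List.ofFn c} = Set.range c := by
    ext r
    simp [List.mem_ofFn]
  rw [Ideal.ofList, h]

lemma isWeaklyRegular_ofFn_iff_reg : ∀ (n : ℕ) (c : Fin n → R),
    IsWeaklyRegular A (List.ofFn c) ↔ Reg A n c
  | 0, c => by
      rw [List.ofFn_zero]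
      exact iff_of_true (IsWeaklyRegular.nil R A) trivial
  | (n + 1), c => by
      rw [List.ofFn_succ', List.concat_eq_append,
        isWeaklyRegular_append_iff, isWeaklyRegular_singleton_iff,
        isWeaklyRegular_ofFn_iff_reg n (fun i => c i.castSucc)]
      show _ ∧ _ ↔ Reg A (n+1) c
      rw [isSMulRegular_quotient_iff_mem_of_smul_mem, ofList_ofFn]
      constructor
      · rintro ⟨h1, h2⟩
        refine ⟨h1, fun m hm => ?_⟩
        rw [← mem_span_range_smul_top_iff (fun i => c i.castSucc)]
        refine h2 m ?_
        rw [mem_span_range_smul_top_iff (fun i => c i.castSucc)]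
        exact hm
      · rintro ⟨h1, h2⟩
        refine ⟨h1, fun m hm => ?_⟩
        rw [mem_span_range_smul_top_iff (fun i => c i.castSucc)] at hm ⊢
        exact h2 m hm

/-! ### Transport along a length equality -/

lemma exact_KD_congr {m m' : ℕ} (h : m = m') (c : Fin m → R) (c' : Fin m' → R)
    (hc : ∀ i : Fin m, c' (Fin.cast h i) = c i) (q : ℕ) :
    (Function.Exact (KD (A := A) c (q + 1)) (KD c q) ↔
      Function.Exact (KD (A := A) c' (q + 1)) (KD c' q)) := by
  subst h
  have hcc : c' = c := funext fun i => hc i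
  rw [hcc]

end KoszulAux

open KoszulAux in
/-- A sequence `x_1, ..., x_p` of elements of a commutative ring `R` is
`A`-regular if and only if for every `1 ≤ k ≤ p` the Koszul complex
`K(x_1,...,x_k; A)` (placed in degrees `-k, ..., 0`) is a left resolution of
`A/(x_1,...,x_k)A`, i.e. its homology vanishes in all negative degrees: the complex is
exact at `K_{q+1}` for every `q ≥ 0` (i.e. at `K_q` for every `q ≥ 1`). -/
theorem isWeaklyRegular_iff_koszul_left_resolution (xs : List R) :
    IsWeaklyRegular A xs ↔
      ∀ k : ℕ, 1 ≤ k → k ≤ xs.length →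
        ∀ q : ℕ,
          Function.Exact (koszulDiff (A := A) (xs.take k) (q + 1))
            (koszulDiff (A := A) (xs.take k) q) := by
  have hA : IsWeaklyRegular A xs ↔ Reg A xs.length xs.get := by
    conv_lhs => rw [← List.ofFn_get xs]
    exact isWeaklyRegular_ofFn_iff_reg xs.length xs.get
  rw [hA, reg_iff_exact]
  constructor
  · intro h k _ hk2 q
    have hlen : k = (xs.take k).length := by rw [List.length_take]; omega
    have hc : ∀ i : Fin k, (xs.take k).get (Fin.cast hlen i) = (xs.get ∘ Fin.castLE hk2) i := by
      intro i
      show (xs.take k).get (Fin.cast hlen i) = xs.get (Fin.castLE hk2 i)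
      rw [List.get_eq_getElem, List.get_eq_getElem, List.getElem_take]
      rfl
    exact (exact_KD_congr hlen (xs.get ∘ Fin.castLE hk2) ((xs.take k).get) hc q).mp
      (h k hk2 q)
  · intro h k hk q
    match k, hk with
    | 0, _ => exact exact_zero _ q
    | (k' + 1), hk =>
      have hlen : k' + 1 = (xs.take (k' + 1)).length := by rw [List.length_take]; omega
      have hc : ∀ i : Fin (k' + 1),
          (xs.take (k' + 1)).get (Fin.cast hlen i) = (xs.get ∘ Fin.castLE hk) i := by
        intro i
        show (xs.take (k' + 1)).get (Fin.cast hlen i) = xs.get (Fin.castLE hk i)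
        rw [List.get_eq_getElem, List.get_eq_getElem, List.getElem_take]
        rfl
      exact (exact_KD_congr hlen (xs.get ∘ Fin.castLE hk) ((xs.take (k' + 1)).get) hc q).mpr
        (h (k' + 1) (Nat.succ_le_succ (Nat.zero_le _)) hk q)
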